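/- Fix a mutation rate μ ∈ (0,1]. For every interior reference profile r ∈ Δ°(A₁) × Δ°(A₂) and every ε > 0, there exists δ > 0 such that for every interior reference profile r' with ‖r' − r‖₂ < δ, any stationary point π^{μ,r} of RMD with reference r and any stationary point π^{μ,r'} of RMD with reference r' satisfy ‖π^{μ,r'} − π^{μ,r}‖₂ < ε. In particular, the map sending an interior reference profile to the associated stationary point of RMD is continuous on Δ°(A₁) × Δ°(A₂). -/
import Mathlib


open Finset Real

noncomputable section

/-- `p` is a point of the probability simplex over `A`. -/
def isSimplex {A : Type*} [Fintype A] (p : A → ℝ) : Prop :=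
  (∀ a, 0 ≤ p a) ∧ ∑ a, p a = 1

/-- `p` is a point of the relative interior of the probability simplex over `A`. -/
def isInterior {A : Type*} [Fintype A] (p : A → ℝ) : Prop :=
  (∀ a, 0 < p a) ∧ ∑ a, p a = 1

/-- Player 1's expected utility in the zero-sum game with payoff `u`. -/
def v1 {A1 A2 : Type*} [Fintype A1] [Fintype A2] (u : A1 → A2 → ℝ)
    (x : A1 → ℝ) (y : A2 → ℝ) : ℝ :=
  ∑ a, ∑ b, x a * y b * u a b

/-- Player 1's conditional expected utility of action `a` against `y`. -/
def q1 {A1 A2 : Type*} [Fintype A2] (u : A1 → A2 → ℝ) (y : A2 → ℝ) (a : A1) : ℝ :=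
  ∑ b, y b * u a b

/-- Player 2's conditional expected utility of action `b` against `x` (utility `-u`). -/
def q2 {A1 A2 : Type*} [Fintype A1] (u : A1 → A2 → ℝ) (x : A1 → ℝ) (b : A2) : ℝ :=
  ∑ a, x a * (- u a b)

/-- Kullback–Leibler divergence. -/
def KL {A : Type*} [Fintype A] (p q : A → ℝ) : ℝ :=
  ∑ a, p a * Real.log (p a / q a)

/-- Sum of KL divergences over the two players. -/
def KL2 {A1 A2 : Type*} [Fintype A1] [Fintype A2]
    (σ σ' : (A1 → ℝ) × (A2 → ℝ)) : ℝ :=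
  KL σ.1 σ'.1 + KL σ.2 σ'.2

/-- `σ` is a stationary point of the replicator-mutator dynamics with mutation
rate `μ` and reference profile `r`. -/
def isStationary {A1 A2 : Type*} [Fintype A1] [Fintype A2] (u : A1 → A2 → ℝ) (μ : ℝ)
    (r σ : (A1 → ℝ) × (A2 → ℝ)) : Prop :=
  isSimplex σ.1 ∧ isSimplex σ.2 ∧
  (∀ a, σ.1 a * (q1 u σ.2 a - v1 u σ.1 σ.2) + μ * (r.1 a - σ.1 a) = 0) ∧
  (∀ b, σ.2 b * (q2 u σ.1 b - (- v1 u σ.1 σ.2)) + μ * (r.2 b - σ.2 b) = 0)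

/-- One multiplicative-weights step with learning rate `η` and gain vector `g`. -/
def mwuStep {A : Type*} [Fintype A] (η : ℝ) (g p : A → ℝ) : A → ℝ :=
  fun a => p a * Real.exp (η * g a) / ∑ a', p a' * Real.exp (η * g a')

/-- Player 1's mutation gradient. -/
def qmu1 {A1 A2 : Type*} [Fintype A2] (u : A1 → A2 → ℝ) (μ : ℝ) (r1 : A1 → ℝ)
    (x : A1 → ℝ) (y : A2 → ℝ) (a : A1) : ℝ :=
  q1 u y a + μ / x a * (r1 a - x a)

/-- Player 2's mutation gradient. -/
def qmu2 {A1 A2 : Type*} [Fintype A1] (u : A1 → A2 → ℝ) (μ : ℝ) (r2 : A2 → ℝ)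
    (x : A1 → ℝ) (y : A2 → ℝ) (b : A2) : ℝ :=
  q2 u x b + μ / y b * (r2 b - y b)

/-- `σ` is a trajectory of M2WU with full feedback, learning rates `η`. -/
def isM2WU {A1 A2 : Type*} [Fintype A1] [Fintype A2] (u : A1 → A2 → ℝ) (μ : ℝ)
    (r : (A1 → ℝ) × (A2 → ℝ)) (η : ℕ → ℝ) (σ : ℕ → (A1 → ℝ) × (A2 → ℝ)) : Prop :=
  ∀ t, (σ (t+1)).1 = mwuStep (η t) (qmu1 u μ r.1 (σ t).1 (σ t).2) (σ t).1 ∧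
       (σ (t+1)).2 = mwuStep (η t) (qmu2 u μ r.2 (σ t).1 (σ t).2) (σ t).2

/-- Exploitability of a strategy profile. -/
def explt {A1 A2 : Type*} [Fintype A1] [Fintype A2] (u : A1 → A2 → ℝ)
    (σ : (A1 → ℝ) × (A2 → ℝ)) : ℝ :=
  (⨆ x : {p : A1 → ℝ // isSimplex p}, v1 u x.1 σ.2) +
  (⨆ y : {p : A2 → ℝ // isSimplex p}, - v1 u σ.1 y.1)

/-- Nash equilibrium of the two-player zero-sum game with payoff `u`. -/
def isNash {A1 A2 : Type*} [Fintype A1] [Fintype A2] (u : A1 → A2 → ℝ)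
    (σ : (A1 → ℝ) × (A2 → ℝ)) : Prop :=
  isSimplex σ.1 ∧ isSimplex σ.2 ∧
  (∀ y, isSimplex y → v1 u σ.1 σ.2 ≤ v1 u σ.1 y) ∧
  (∀ x, isSimplex x → v1 u x σ.2 ≤ v1 u σ.1 σ.2)

/-- ℓ¹ norm of a finitely supported vector. -/
def l1norm {A : Type*} [Fintype A] (p : A → ℝ) : ℝ := ∑ a, |p a|

/-- Euclidean distance between two profiles (concatenated coordinates). -/
def dist2 {A1 A2 : Type*} [Fintype A1] [Fintype A2]
    (σ σ' : (A1 → ℝ) × (A2 → ℝ)) : ℝ :=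
  Real.sqrt ((∑ a, (σ.1 a - σ'.1 a) ^ 2) + (∑ b, (σ.2 b - σ'.2 b) ^ 2))
set_option maxHeartbeats 1000000 in
/-- **Lemma 5 (continuity of the stationary-point map).** -/
private lemma simplex_coord_le_one {A : Type*} [Fintype A] {p : A → ℝ}
    (hp : isSimplex p) (a : A) : p a ≤ 1 := by
  have := Finset.single_le_sum (f := p) (fun i _ => hp.1 i) (Finset.mem_univ a)
  rw [hp.2] at this; exact this

private lemma stat_facts {A : Type*} [Fintype A] {p r g : A → ℝ} {v μ M : ℝ}
    (hp : isSimplex p) (hr : ∀ a, 0 < r a) (hμ : 0 < μ)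
    (hg : ∀ a, |g a| ≤ M) (hv : |v| ≤ M)
    (hstat : ∀ a, p a * (g a - v) + μ * (r a - p a) = 0) :
    ∀ a, 0 < p a ∧ μ * r a ≤ p a * (2*M + μ) ∧ g a + μ * r a / p a = v + μ := by
  intro a
  have key : p a * ((v + μ) - g a) = μ * r a := by linear_combination -(hstat a)
  have hpos : 0 < p a := by
    rcases (hp.1 a).lt_or_eq with h | h
    · exact h
    · exfalso
      rw [← h] at key
      nlinarith [mul_pos hμ (hr a)]
  refine ⟨hpos, ?_, ?_⟩
  · have h1 : (v + μ) - g a ≤ 2*M + μ := by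
      have h2 := abs_le.mp (hg a); have h3 := abs_le.mp hv; linarith
    calc μ * r a = p a * ((v + μ) - g a) := key.symm
      _ ≤ p a * (2*M + μ) := mul_le_mul_of_nonneg_left h1 (hp.1 a)
  · have hne : p a ≠ 0 := hpos.ne'
    field_simp
    linear_combination -key

private lemma sumE {A B : Type*} [Fintype A] [Fintype B] (u' : A → B → ℝ) (μ v v' : ℝ)
    (x x' r r' : A → ℝ) (y y' : B → ℝ)
    (hx : ∑ a, x a = 1) (hx' : ∑ a, x' a = 1)
    (g : ∀ a, q1 u' y a + μ * r a / x a = v + μ)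
    (g' : ∀ a, q1 u' y' a + μ * r' a / x' a = v' + μ) :
    ∑ a, (x a - x' a) * ((q1 u' y a - q1 u' y' a) + μ * (r a / x a - r' a / x' a)) = 0 := by
  have h1 : ∀ a ∈ Finset.univ,
      (x a - x' a) * ((q1 u' y a - q1 u' y' a) + μ * (r a / x a - r' a / x' a))
      = (x a - x' a) * (v - v') := by
    intro a _
    linear_combination (x a - x' a) * (g a) - (x a - x' a) * (g' a)
  rw [Finset.sum_congr rfl h1, ← Finset.sum_mul, Finset.sum_sub_distrib, hx, hx']
  ring

private lemma cross_zero {A1 A2 : Type*} [Fintype A1] [Fintype A2] (u : A1 → A2 → ℝ)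
    (x x' : A1 → ℝ) (y y' : A2 → ℝ) :
    (∑ a, (x a - x' a) * (q1 u y a - q1 u y' a))
      + (∑ b, (y b - y' b) * (q2 u x b - q2 u x' b)) = 0 := by
  have h1 : ∀ a ∈ Finset.univ, (x a - x' a) * (q1 u y a - q1 u y' a)
      = ∑ b, (x a - x' a) * (y b - y' b) * u a b := by
    intro a _
    simp only [q1, ← Finset.sum_sub_distrib, Finset.mul_sum]
    exact Finset.sum_congr rfl fun b _ => by ring
  have h2 : ∀ b ∈ Finset.univ, (y b - y' b) * (q2 u x b - q2 u x' b)
      = ∑ a, -((x a - x' a) * (y b - y' b) * u a b) := by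
    intro b _
    simp only [q2, ← Finset.sum_sub_distrib, Finset.mul_sum]
    exact Finset.sum_congr rfl fun a _ => by ring
  rw [Finset.sum_congr rfl h1, Finset.sum_congr rfl h2, Finset.sum_comm,
    ← Finset.sum_add_distrib]
  simp [← Finset.sum_add_distrib]

private lemma q1_abs_le {A1 A2 : Type*} [Fintype A2] {u : A1 → A2 → ℝ} {M : ℝ}
    (hM : ∀ a b, |u a b| ≤ M) {y : A2 → ℝ} (hy : isSimplex y) (a : A1) :
    |q1 u y a| ≤ M := by
  calc |q1 u y a| ≤ ∑ b, |y b * u a b| := Finset.abs_sum_le_sum_abs _ _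
    _ ≤ ∑ b, y b * M := by
        refine Finset.sum_le_sum fun b _ => ?_
        rw [abs_mul, abs_of_nonneg (hy.1 b)]
        exact mul_le_mul_of_nonneg_left (hM a b) (hy.1 b)
    _ = M := by rw [← Finset.sum_mul, hy.2, one_mul]

private lemma v1_abs_le {A1 A2 : Type*} [Fintype A1] [Fintype A2] {u : A1 → A2 → ℝ} {M : ℝ}
    (hM : ∀ a b, |u a b| ≤ M) {x : A1 → ℝ} {y : A2 → ℝ}
    (hx : isSimplex x) (hy : isSimplex y) : |v1 u x y| ≤ M := by
  have hv : v1 u x y = ∑ a, x a * q1 u y a := by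
    simp [v1, q1, Finset.mul_sum, mul_assoc]
  rw [hv]
  calc |∑ a, x a * q1 u y a| ≤ ∑ a, |x a * q1 u y a| := Finset.abs_sum_le_sum_abs _ _
    _ ≤ ∑ a, x a * M := by
        refine Finset.sum_le_sum fun a _ => ?_
        rw [abs_mul, abs_of_nonneg (hx.1 a)]
        exact mul_le_mul_of_nonneg_left (q1_abs_le hM hy a) (hx.1 a)
    _ = M := by rw [← Finset.sum_mul, hx.2, one_mul]

set_option maxHeartbeats 1000000 in
/-- **Lemma 5 (continuity of the stationary-point map).** -/
theorem stationary_point_map_continuous {A1 A2 : Type*}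
    [Fintype A1] [Fintype A2]
    (u : A1 → A2 → ℝ)
    (μ : ℝ) (hμ : 0 < μ ∧ μ ≤ 1) :
    ∀ r : (A1 → ℝ) × (A2 → ℝ), isInterior r.1 → isInterior r.2 →
    ∀ ε : ℝ, 0 < ε → ∃ δ : ℝ, 0 < δ ∧
      ∀ r' : (A1 → ℝ) × (A2 → ℝ), isInterior r'.1 → isInterior r'.2 →
        dist2 r' r < δ →
        ∀ σst σst' : (A1 → ℝ) × (A2 → ℝ),
          isStationary u μ r σst → isStationary u μ r' σst' →
          dist2 σst' σst < ε := by
  obtain ⟨hμ0, -⟩ := hμ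
  intro r hr1 hr2 ε hε
  -- payoff bound
  set M : ℝ := ∑ a, ∑ b, |u a b| with hMdef
  have hM0 : 0 ≤ M := Finset.sum_nonneg fun a _ => Finset.sum_nonneg fun b _ => abs_nonneg _
  have hM : ∀ a b, |u a b| ≤ M := by
    intro a b
    calc |u a b| ≤ ∑ b', |u a b'| :=
          Finset.single_le_sum (f := fun b' => |u a b'|) (fun b' _ => abs_nonneg _) (Finset.mem_univ b)
      _ ≤ M := Finset.single_le_sum (f := fun a' => ∑ b', |u a' b'|)
          (fun a' _ => Finset.sum_nonneg fun b' _ => abs_nonneg _) (Finset.mem_univ a)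
  have hMn : ∀ (b : A2) (a : A1), |(fun b a => -u a b) b a| ≤ M := by
    intro b a; rw [abs_neg]; exact hM a b
  have h2Mμ : (0:ℝ) < 2*M + μ := by linarith
  -- nonemptiness
  have hne1 : (Finset.univ : Finset A1).Nonempty := by
    by_contra h
    rw [Finset.not_nonempty_iff_eq_empty] at h
    have h2 := hr1.2
    rw [h, Finset.sum_empty] at h2
    norm_num at h2
  have hne2 : (Finset.univ : Finset A2).Nonempty := by
    by_contra h
    rw [Finset.not_nonempty_iff_eq_empty] at h
    have h2 := hr2.2
    rw [h, Finset.sum_empty] at h2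
    norm_num at h2
  set c : ℝ := min (Finset.univ.inf' hne1 r.1) (Finset.univ.inf' hne2 r.2) with hcdef
  have hc0 : 0 < c := by
    apply lt_min
    · exact (Finset.lt_inf'_iff hne1).mpr fun a _ => hr1.1 a
    · exact (Finset.lt_inf'_iff hne2).mpr fun b _ => hr2.1 b
  have hcr1 : ∀ a, c ≤ r.1 a :=
    fun a => le_trans (min_le_left _ _) (Finset.inf'_le _ (Finset.mem_univ a))
  have hcr2 : ∀ b, c ≤ r.2 b :=
    fun b => le_trans (min_le_right _ _) (Finset.inf'_le _ (Finset.mem_univ b))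
  set β : ℝ := μ * (c/2) / (2*M + μ) with hβdef
  have hβ0 : 0 < β := div_pos (mul_pos hμ0 (by linarith)) h2Mμ
  set δ : ℝ := min (c/2) (β * c * ε^2 / 8) with hδdef
  have hδ0 : 0 < δ := lt_min (by linarith) (by positivity)
  refine ⟨δ, hδ0, ?_⟩
  intro r' hr1' hr2' hdist σ σ' hσ hσ'
  obtain ⟨hs1, hs2, heq1, heq2⟩ := hσ
  obtain ⟨hs1', hs2', heq1', heq2'⟩ := hσ'
  -- coordinatewise closeness of references
  have hΔr1 : ∀ a, |r'.1 a - r.1 a| < δ := by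
    intro a
    refine lt_of_le_of_lt ?_ hdist
    unfold dist2
    rw [← Real.sqrt_sq_eq_abs]
    apply Real.sqrt_le_sqrt
    have h1 : (r'.1 a - r.1 a)^2 ≤ ∑ x, (r'.1 x - r.1 x)^2 :=
      Finset.single_le_sum (f := fun x => (r'.1 x - r.1 x)^2) (fun i _ => sq_nonneg _) (Finset.mem_univ a)
    have h2 : (0:ℝ) ≤ ∑ b, (r'.2 b - r.2 b)^2 := Finset.sum_nonneg fun i _ => sq_nonneg _
    linarith
  have hΔr2 : ∀ b, |r'.2 b - r.2 b| < δ := by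
    intro b
    refine lt_of_le_of_lt ?_ hdist
    unfold dist2
    rw [← Real.sqrt_sq_eq_abs]
    apply Real.sqrt_le_sqrt
    have h1 : (r'.2 b - r.2 b)^2 ≤ ∑ x, (r'.2 x - r.2 x)^2 :=
      Finset.single_le_sum (f := fun x => (r'.2 x - r.2 x)^2) (fun i _ => sq_nonneg _) (Finset.mem_univ b)
    have h2 : (0:ℝ) ≤ ∑ a, (r'.1 a - r.1 a)^2 := Finset.sum_nonneg fun i _ => sq_nonneg _
    linarith
  have hδc : δ ≤ c/2 := min_le_left _ _
  have hr1half : ∀ a, c/2 ≤ r'.1 a := by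
    intro a
    have h1 := (abs_lt.mp (hΔr1 a)).1
    have := hcr1 a
    linarith
  have hr2half : ∀ b, c/2 ≤ r'.2 b := by
    intro b
    have h1 := (abs_lt.mp (hΔr2 b)).1
    have := hcr2 b
    linarith
  -- stationary-point facts
  have F1 := stat_facts hs1 hr1.1 hμ0 (fun a => q1_abs_le hM hs2 a)
    (v1_abs_le hM hs1 hs2) heq1
  have F2 := stat_facts hs2 hr2.1 hμ0
    (fun b => q1_abs_le (u := fun b a => -u a b) hMn hs1 b)
    (by rw [abs_neg]; exact v1_abs_le hM hs1 hs2) heq2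
  have F1' := stat_facts hs1' hr1'.1 hμ0 (fun a => q1_abs_le hM hs2' a)
    (v1_abs_le hM hs1' hs2') heq1'
  have F2' := stat_facts hs2' hr2'.1 hμ0
    (fun b => q1_abs_le (u := fun b a => -u a b) hMn hs1' b)
    (by rw [abs_neg]; exact v1_abs_le hM hs1' hs2') heq2'
  -- lower bounds on σ' coordinates
  have hx'β : ∀ a, β ≤ σ'.1 a := by
    intro a
    rw [hβdef, div_le_iff₀ h2Mμ]
    have h1 := (F1' a).2.1
    have h2 := hr1half a
    nlinarith
  have hy'β : ∀ b, β ≤ σ'.2 b := by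
    intro b
    rw [hβdef, div_le_iff₀ h2Mμ]
    have h1 := (F2' b).2.1
    have h2 := hr2half b
    nlinarith
  -- the key variational identity
  have E1 := sumE u μ (v1 u σ.1 σ.2) (v1 u σ'.1 σ'.2) σ.1 σ'.1 r.1 r'.1 σ.2 σ'.2
    hs1.2 hs1'.2 (fun a => (F1 a).2.2) (fun a => (F1' a).2.2)
  have E2 : ∑ b, (σ.2 b - σ'.2 b) * ((q2 u σ.1 b - q2 u σ'.1 b)
      + μ * (r.2 b / σ.2 b - r'.2 b / σ'.2 b)) = 0 :=
    sumE (fun b a => -u a b) μ (-(v1 u σ.1 σ.2)) (-(v1 u σ'.1 σ'.2)) σ.2 σ'.2 r.2 r'.2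
      σ.1 σ'.1 hs2.2 hs2'.2 (fun b => (F2 b).2.2) (fun b => (F2' b).2.2)
  have C := cross_zero u σ.1 σ'.1 σ.2 σ'.2
  -- split sums
  have split1 : ∑ a, (σ.1 a - σ'.1 a) * ((q1 u σ.2 a - q1 u σ'.2 a)
      + μ * (r.1 a / σ.1 a - r'.1 a / σ'.1 a))
      = (∑ a, (σ.1 a - σ'.1 a) * (q1 u σ.2 a - q1 u σ'.2 a))
        + μ * ∑ a, (σ.1 a - σ'.1 a) * (r.1 a / σ.1 a - r'.1 a / σ'.1 a) := by
    rw [Finset.mul_sum, ← Finset.sum_add_distrib]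
    exact Finset.sum_congr rfl fun a _ => by ring
  have split2 : ∑ b, (σ.2 b - σ'.2 b) * ((q2 u σ.1 b - q2 u σ'.1 b)
      + μ * (r.2 b / σ.2 b - r'.2 b / σ'.2 b))
      = (∑ b, (σ.2 b - σ'.2 b) * (q2 u σ.1 b - q2 u σ'.1 b))
        + μ * ∑ b, (σ.2 b - σ'.2 b) * (r.2 b / σ.2 b - r'.2 b / σ'.2 b) := by
    rw [Finset.mul_sum, ← Finset.sum_add_distrib]
    exact Finset.sum_congr rfl fun b _ => by ring
  rw [split1] at E1
  rw [split2] at E2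
  have hT : (∑ a, (σ.1 a - σ'.1 a) * (r.1 a / σ.1 a - r'.1 a / σ'.1 a))
      + (∑ b, (σ.2 b - σ'.2 b) * (r.2 b / σ.2 b - r'.2 b / σ'.2 b)) = 0 := by
    have hmul : μ * ((∑ a, (σ.1 a - σ'.1 a) * (r.1 a / σ.1 a - r'.1 a / σ'.1 a))
        + (∑ b, (σ.2 b - σ'.2 b) * (r.2 b / σ.2 b - r'.2 b / σ'.2 b))) = 0 := by
      linear_combination E1 + E2 - C
    exact (mul_eq_zero.mp hmul).resolve_left hμ0.ne'
  -- rewrite T summands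
  have hterm1 : ∀ a ∈ Finset.univ, (σ.1 a - σ'.1 a) * (r.1 a / σ.1 a - r'.1 a / σ'.1 a)
      = -(r.1 a * (σ.1 a - σ'.1 a)^2 / (σ.1 a * σ'.1 a))
        + (r.1 a - r'.1 a) * (σ.1 a - σ'.1 a) / σ'.1 a := by
    intro a _
    have h1 : σ.1 a ≠ 0 := (F1 a).1.ne'
    have h2 : σ'.1 a ≠ 0 := (F1' a).1.ne'
    field_simp
    ring
  have hterm2 : ∀ b ∈ Finset.univ, (σ.2 b - σ'.2 b) * (r.2 b / σ.2 b - r'.2 b / σ'.2 b)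
      = -(r.2 b * (σ.2 b - σ'.2 b)^2 / (σ.2 b * σ'.2 b))
        + (r.2 b - r'.2 b) * (σ.2 b - σ'.2 b) / σ'.2 b := by
    intro b _
    have h1 : σ.2 b ≠ 0 := (F2 b).1.ne'
    have h2 : σ'.2 b ≠ 0 := (F2' b).1.ne'
    field_simp
    ring
  rw [Finset.sum_congr rfl hterm1, Finset.sum_congr rfl hterm2,
    Finset.sum_add_distrib, Finset.sum_add_distrib, Finset.sum_neg_distrib,
    Finset.sum_neg_distrib] at hT
  -- hT : -(L1) + R1 + (-(L2) + R2) = 0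
  set L1 : ℝ := ∑ a, r.1 a * (σ.1 a - σ'.1 a)^2 / (σ.1 a * σ'.1 a) with hL1def
  set L2 : ℝ := ∑ b, r.2 b * (σ.2 b - σ'.2 b)^2 / (σ.2 b * σ'.2 b) with hL2def
  set R1 : ℝ := ∑ a, (r.1 a - r'.1 a) * (σ.1 a - σ'.1 a) / σ'.1 a with hR1def
  set R2 : ℝ := ∑ b, (r.2 b - r'.2 b) * (σ.2 b - σ'.2 b) / σ'.2 b with hR2def
  -- lower bound on L
  have hL1 : c * ∑ a, (σ.1 a - σ'.1 a)^2 ≤ L1 := by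
    rw [hL1def, Finset.mul_sum]
    refine Finset.sum_le_sum fun a _ => ?_
    have px : 0 < σ.1 a := (F1 a).1
    have px' : 0 < σ'.1 a := (F1' a).1
    have hx1 : σ.1 a ≤ 1 := simplex_coord_le_one hs1 a
    have hx1' : σ'.1 a ≤ 1 := simplex_coord_le_one hs1' a
    calc c * (σ.1 a - σ'.1 a)^2 ≤ r.1 a * (σ.1 a - σ'.1 a)^2 :=
          mul_le_mul_of_nonneg_right (hcr1 a) (sq_nonneg _)
      _ ≤ r.1 a * ((σ.1 a - σ'.1 a)^2 / (σ.1 a * σ'.1 a)) := by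
          refine mul_le_mul_of_nonneg_left ?_ (hr1.1 a).le
          rw [le_div_iff₀ (mul_pos px px')]
          have hxx : σ.1 a * σ'.1 a ≤ 1 := by nlinarith
          exact mul_le_of_le_one_right (sq_nonneg _) hxx
      _ = r.1 a * (σ.1 a - σ'.1 a)^2 / (σ.1 a * σ'.1 a) := by rw [mul_div_assoc]
  have hL2 : c * ∑ b, (σ.2 b - σ'.2 b)^2 ≤ L2 := by
    rw [hL2def, Finset.mul_sum]
    refine Finset.sum_le_sum fun b _ => ?_
    have px : 0 < σ.2 b := (F2 b).1
    have px' : 0 < σ'.2 b := (F2' b).1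
    have hx1 : σ.2 b ≤ 1 := simplex_coord_le_one hs2 b
    have hx1' : σ'.2 b ≤ 1 := simplex_coord_le_one hs2' b
    calc c * (σ.2 b - σ'.2 b)^2 ≤ r.2 b * (σ.2 b - σ'.2 b)^2 :=
          mul_le_mul_of_nonneg_right (hcr2 b) (sq_nonneg _)
      _ ≤ r.2 b * ((σ.2 b - σ'.2 b)^2 / (σ.2 b * σ'.2 b)) := by
          refine mul_le_mul_of_nonneg_left ?_ (hr2.1 b).le
          rw [le_div_iff₀ (mul_pos px px')]
          have hxx : σ.2 b * σ'.2 b ≤ 1 := by nlinarith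
          exact mul_le_of_le_one_right (sq_nonneg _) hxx
      _ = r.2 b * (σ.2 b - σ'.2 b)^2 / (σ.2 b * σ'.2 b) := by rw [mul_div_assoc]
  -- upper bound on R
  have habs1 : ∑ a, |σ.1 a - σ'.1 a| ≤ 2 := by
    calc ∑ a, |σ.1 a - σ'.1 a| ≤ ∑ a, (σ.1 a + σ'.1 a) := by
          refine Finset.sum_le_sum fun a _ => ?_
          rw [abs_le]
          constructor <;> nlinarith [hs1.1 a, hs1'.1 a]
      _ = 2 := by rw [Finset.sum_add_distrib, hs1.2, hs1'.2]; norm_num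
  have habs2 : ∑ b, |σ.2 b - σ'.2 b| ≤ 2 := by
    calc ∑ b, |σ.2 b - σ'.2 b| ≤ ∑ b, (σ.2 b + σ'.2 b) := by
          refine Finset.sum_le_sum fun b _ => ?_
          rw [abs_le]
          constructor <;> nlinarith [hs2.1 b, hs2'.1 b]
      _ = 2 := by rw [Finset.sum_add_distrib, hs2.2, hs2'.2]; norm_num
  have hR1b : R1 ≤ δ / β * 2 := by
    calc R1 ≤ ∑ a, δ * |σ.1 a - σ'.1 a| / β := by
          rw [hR1def]
          refine Finset.sum_le_sum fun a _ => ?_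
          refine div_le_div₀ (by positivity) ?_ hβ0 (hx'β a)
          calc (r.1 a - r'.1 a) * (σ.1 a - σ'.1 a)
              ≤ |(r.1 a - r'.1 a) * (σ.1 a - σ'.1 a)| := le_abs_self _
            _ = |r.1 a - r'.1 a| * |σ.1 a - σ'.1 a| := abs_mul _ _
            _ ≤ δ * |σ.1 a - σ'.1 a| := by
                refine mul_le_mul_of_nonneg_right ?_ (abs_nonneg _)
                rw [abs_sub_comm]; exact (hΔr1 a).le
      _ = δ / β * ∑ a, |σ.1 a - σ'.1 a| := by
          rw [Finset.mul_sum]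
          exact Finset.sum_congr rfl fun a _ => by ring
      _ ≤ δ / β * 2 := by
          refine mul_le_mul_of_nonneg_left habs1 (by positivity)
  have hR2b : R2 ≤ δ / β * 2 := by
    calc R2 ≤ ∑ b, δ * |σ.2 b - σ'.2 b| / β := by
          rw [hR2def]
          refine Finset.sum_le_sum fun b _ => ?_
          refine div_le_div₀ (by positivity) ?_ hβ0 (hy'β b)
          calc (r.2 b - r'.2 b) * (σ.2 b - σ'.2 b)
              ≤ |(r.2 b - r'.2 b) * (σ.2 b - σ'.2 b)| := le_abs_self _
            _ = |r.2 b - r'.2 b| * |σ.2 b - σ'.2 b| := abs_mul _ _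
            _ ≤ δ * |σ.2 b - σ'.2 b| := by
                refine mul_le_mul_of_nonneg_right ?_ (abs_nonneg _)
                rw [abs_sub_comm]; exact (hΔr2 b).le
      _ = δ / β * ∑ b, |σ.2 b - σ'.2 b| := by
          rw [Finset.mul_sum]
          exact Finset.sum_congr rfl fun b _ => by ring
      _ ≤ δ / β * 2 := by
          refine mul_le_mul_of_nonneg_left habs2 (by positivity)
  -- combine
  have hD2 : (∑ a, (σ.1 a - σ'.1 a)^2) + (∑ b, (σ.2 b - σ'.2 b)^2) ≤ ε^2/2 := by
    have hchain : c * ((∑ a, (σ.1 a - σ'.1 a)^2) + (∑ b, (σ.2 b - σ'.2 b)^2))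
        ≤ 4 * (δ / β) := by
      have hLR : L1 + L2 = R1 + R2 := by linarith
      calc c * ((∑ a, (σ.1 a - σ'.1 a)^2) + (∑ b, (σ.2 b - σ'.2 b)^2))
          = c * (∑ a, (σ.1 a - σ'.1 a)^2) + c * (∑ b, (σ.2 b - σ'.2 b)^2) := by ring
        _ ≤ L1 + L2 := by linarith
        _ = R1 + R2 := hLR
        _ ≤ 4 * (δ / β) := by linarith
    have hδβ : δ / β ≤ c * ε^2 / 8 := by
      rw [div_le_iff₀ hβ0]
      calc δ ≤ β * c * ε^2 / 8 := min_le_right _ _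
        _ = c * ε^2 / 8 * β := by ring
    have h4 : 4 * (δ / β) ≤ c * (ε^2/2) := by linarith
    exact le_of_mul_le_mul_left (le_trans hchain h4) hc0
  -- conclude
  have hrw1 : (∑ a, (σ'.1 a - σ.1 a)^2) = ∑ a, (σ.1 a - σ'.1 a)^2 :=
    Finset.sum_congr rfl fun a _ => by ring
  have hrw2 : (∑ b, (σ'.2 b - σ.2 b)^2) = ∑ b, (σ.2 b - σ'.2 b)^2 :=
    Finset.sum_congr rfl fun b _ => by ring
  unfold dist2
  rw [hrw1, hrw2, show ε = Real.sqrt (ε^2) by rw [Real.sqrt_sq hε.le]]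
  apply Real.sqrt_lt_sqrt
  · positivity
  · nlinarith [hD2, pow_pos hε 2]
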